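/- Let M₁, M₂ be Hermitian q^n×q^n complex matrices and let U = U₁⊗⋯⊗Uₙ be a local unitary on (ℂ^q)^{⊗n}. Then B(z; U M₁ U†, U M₂ U†) = B(z; M₁, M₂) as polynomials in ℂ[z]. -/

import Mathlib

open Matrix Polynomial
open scoped BigOperators ComplexConjugate Kronecker

noncomputable section

/-- Generalized Pauli `X` (cyclic shift) on `ℂ^q`. -/
def Xmat (q : ℕ) : Matrix (Fin q) (Fin q) ℂ :=
  fun i j => if (i : ℕ) = ((j : ℕ) + 1) % q then 1 else 0

/-- Generalized Pauli `Z` (clock) on `ℂ^q`, `Z|j⟩ = ζ^j |j⟩` with `ζ = exp(2πi/q)`. -/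
def Zmat (q : ℕ) : Matrix (Fin q) (Fin q) ℂ :=
  Matrix.diagonal fun j => Complex.exp (2 * (Real.pi : ℂ) * Complex.I / (q : ℂ)) ^ (j : ℕ)

/-- Single-qudit Pauli `E(a,b) = X^a Z^b` for a label `(a,b) ∈ (ℤ/qℤ)²`. -/
def Epauli (q : ℕ) (p : ZMod q × ZMod q) : Matrix (Fin q) (Fin q) ℂ :=
  Xmat q ^ p.1.val * Zmat q ^ p.2.val

/-- Multi-qudit Pauli `E(p) = E(p₁) ⊗ ⋯ ⊗ E(pₙ)` on the space indexed by `ι → Fin q`. -/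
def EV (q : ℕ) {ι : Type} [Fintype ι] (p : ι → ZMod q × ZMod q) :
    Matrix (ι → Fin q) (ι → Fin q) ℂ :=
  fun v w => ∏ i, Epauli q (p i) (v i) (w i)

/-- Weight of a Pauli label vector: the number of non-identity factors. -/
def wtL (q : ℕ) {ι : Type} [Fintype ι] (p : ι → ZMod q × ZMod q) : ℕ :=
  (Finset.univ.filter fun i => p i ≠ 0).card

/-- Kronecker (tensor) product of a family of local `q × q` matrices. -/
def kron (q : ℕ) {ι : Type} [Fintype ι] (Us : ι → Matrix (Fin q) (Fin q) ℂ) :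
    Matrix (ι → Fin q) (ι → Fin q) ℂ :=
  fun v w => ∏ i, Us i (v i) (w i)

/-- Shor–Laflamme enumerator polynomial `B(z; M₁, M₂)`. -/
def enumB (q : ℕ) [NeZero q] {ι : Type} [Fintype ι] [DecidableEq ι]
    (M₁ M₂ : Matrix (ι → Fin q) (ι → Fin q) ℂ) : Polynomial ℂ :=
  ∑ p : ι → ZMod q × ZMod q,
    Polynomial.C (Matrix.trace ((EV q p)ᴴ * M₁ * EV q p * M₂)) *
      Polynomial.X ^ wtL q p

----------------------------------------------------------------------
-- Auxiliary development
----------------------------------------------------------------------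

namespace SLAux

variable (q : ℕ) [NeZero q]

local notation "ζ" => Complex.exp (2 * (Real.pi : ℂ) * Complex.I / (q : ℂ))

lemma qpos : 0 < q := Nat.pos_of_ne_zero (NeZero.ne q)

lemma Xpow_apply (k : ℕ) (i j : Fin q) :
    (Xmat q ^ k) i j = if (i : ℕ) = ((j : ℕ) + k) % q then 1 else 0 := by
  induction k generalizing j with
  | zero =>
    simp only [pow_zero, Matrix.one_apply, Nat.add_zero, Nat.mod_eq_of_lt j.isLt]
    exact if_congr (by rw [Fin.ext_iff]) rfl rfl
  | succ k ih =>
    rw [pow_succ, Matrix.mul_apply]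
    have hm : ∀ m : Fin q, Xmat q m j
        = if m = (⟨((j:ℕ)+1)%q, Nat.mod_lt _ (qpos q)⟩ : Fin q) then 1 else 0 := by
      intro m
      exact if_congr (by rw [Fin.ext_iff]) rfl rfl
    simp_rw [hm, mul_ite, mul_one, mul_zero]
    rw [Finset.sum_ite_eq']
    simp only [Finset.mem_univ, if_true, ih]
    have harith : (((j:ℕ)+1) % q + k) % q = ((j:ℕ) + (k+1)) % q := by
      rw [Nat.mod_add_mod]
      congr 1
      ring
    simp only [harith]

lemma Epauli_apply (p : ZMod q × ZMod q) (i j : Fin q) :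
    Epauli q p i j =
      (if (i : ℕ) = ((j : ℕ) + p.1.val) % q then 1 else 0) * ζ ^ ((j : ℕ) * p.2.val) := by
  rw [Epauli, Zmat, Matrix.diagonal_pow, Matrix.mul_diagonal, Xpow_apply]
  simp [Pi.pow_apply, ← pow_mul]

lemma Epauli_zero : Epauli q (0 : ZMod q × ZMod q) = 1 := by
  simp [Epauli, Prod.fst_zero, Prod.snd_zero, ZMod.val_zero]

lemma zeta_sum (s u : Fin q) :
    ∑ b : ZMod q, star (ζ ^ ((s : ℕ) * b.val)) * ζ ^ ((u : ℕ) * b.val)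
      = if s = u then (q : ℂ) else 0 := by
  have hq0 : q ≠ 0 := NeZero.ne q
  have hprim := Complex.isPrimitiveRoot_exp q hq0
  have habs : ‖(ζ : ℂ)‖ = 1 := by
    have harg : (2 * (Real.pi : ℂ) * Complex.I / (q : ℂ)) = ((2 * Real.pi / q : ℝ) : ℂ) * Complex.I := by
      push_cast
      ring
    rw [harg, Complex.norm_exp_ofReal_mul_I]
  have hζ0 : (ζ : ℂ) ≠ 0 := Complex.exp_ne_zero _
  have hstar : star (ζ : ℂ) = (ζ : ℂ)⁻¹ := (Complex.inv_eq_conj habs).symm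
  set w : ℂ := ((ζ : ℂ) ^ (s : ℕ))⁻¹ * (ζ : ℂ) ^ (u : ℕ) with hw
  have hterm : ∀ b : ZMod q, star ((ζ:ℂ) ^ ((s : ℕ) * b.val)) * (ζ:ℂ) ^ ((u : ℕ) * b.val) = w ^ b.val := by
    intro b
    rw [star_pow, hstar, pow_mul, pow_mul, inv_pow, ← mul_pow, hw]
  simp_rw [hterm]
  have hsum : ∑ b : ZMod q, w ^ b.val = ∑ j ∈ Finset.range q, w ^ j := by
    refine Finset.sum_nbij' (fun b => b.val) (fun j => (j : ZMod q)) ?_ ?_ ?_ ?_ ?_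
    · intro b _; exact Finset.mem_range.mpr (ZMod.val_lt b)
    · intro j _; exact Finset.mem_univ _
    · intro b _; exact ZMod.natCast_rightInverse b
    · intro j hj; exact (ZMod.val_natCast q j).trans (Nat.mod_eq_of_lt (Finset.mem_range.mp hj))
    · intro b _; rfl
  rw [hsum]
  by_cases hsu : s = u
  · subst hsu
    have hw1 : w = 1 := inv_mul_cancel₀ (pow_ne_zero _ hζ0)
    simp [hw1]
  · have hwq : w ^ q = 1 := by
      rw [hw, mul_pow, inv_pow, ← pow_mul, ← pow_mul, mul_comm (s:ℕ) q, mul_comm (u:ℕ) q,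
        pow_mul, pow_mul, hprim.pow_eq_one, one_pow, one_pow, inv_one, one_mul]
    have hw1 : w ≠ 1 := by
      intro hc
      have h2 : (ζ:ℂ) ^ (u : ℕ) = (ζ:ℂ) ^ (s : ℕ) := by
        have := congrArg (fun z => ((ζ:ℂ) ^ (s : ℕ)) * z) hc
        simpa [hw, mul_inv_cancel_left₀ (pow_ne_zero (s:ℕ) hζ0)] using this
      exact hsu (Fin.ext (hprim.pow_inj s.isLt u.isLt h2.symm))
    rw [geom_sum_eq hw1, hwq, sub_self, zero_div, if_neg hsu]

lemma ind_sum (α β γ : Fin q) :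
    ∑ a : ZMod q,
      (if (α:ℕ) = ((γ:ℕ) + a.val) % q then (1:ℂ) else 0)
        * (if (β:ℕ) = ((γ:ℕ) + a.val) % q then 1 else 0)
      = if α = β then 1 else 0 := by
  have key : ∀ a : ZMod q, ((γ:ℕ) + a.val) % q = (((γ:ℕ) : ZMod q) + a).val := by
    intro a
    rw [ZMod.val_add, ZMod.val_natCast, Nat.mod_add_mod]
  set a₀ : ZMod q := ((α:ℕ) : ZMod q) - ((γ:ℕ) : ZMod q) with ha₀
  rw [Finset.sum_eq_single a₀]
  · have h0 : ((γ:ℕ) + a₀.val) % q = (α:ℕ) := by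
      rw [key a₀, ha₀, add_sub_cancel, ZMod.val_natCast, Nat.mod_eq_of_lt α.isLt]
    rw [h0]
    simp [Fin.val_eq_val, eq_comm]
  · intro a _ ha
    rw [if_neg, zero_mul]
    intro hc
    apply ha
    rw [key a] at hc
    have h2 : ((α:ℕ) : ZMod q) = ((γ:ℕ) : ZMod q) + a := by
      have := congrArg (fun m : ℕ => (m : ZMod q)) hc
      simpa [ZMod.natCast_rightInverse _] using this
    rw [ha₀, h2, add_sub_cancel_left]
  · intro h; exact absurd (Finset.mem_univ a₀) h

lemma orth (α γ β δ : Fin q) :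
    ∑ r : ZMod q × ZMod q, star (Epauli q r α γ) * Epauli q r β δ
      = (q : ℂ) * ((if α = β then 1 else 0) * (if γ = δ then 1 else 0)) := by
  rw [Fintype.sum_prod_type]
  have hterm : ∀ (a b : ZMod q),
      star (Epauli q (a, b) α γ) * Epauli q (a, b) β δ
        = ((if (α:ℕ) = ((γ:ℕ) + a.val) % q then (1:ℂ) else 0)
            * (if (β:ℕ) = ((δ:ℕ) + a.val) % q then 1 else 0))
          * (star ((ζ:ℂ) ^ ((γ:ℕ) * b.val)) * (ζ:ℂ) ^ ((δ:ℕ) * b.val)) := by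
    intro a b
    rw [Epauli_apply, Epauli_apply]
    simp only [star_mul', apply_ite (star : ℂ → ℂ), star_one, star_zero]
    ring
  simp_rw [hterm]
  have h2 : ∀ a : ZMod q,
      (∑ b : ZMod q,
        ((if (α:ℕ) = ((γ:ℕ) + a.val) % q then (1:ℂ) else 0)
            * (if (β:ℕ) = ((δ:ℕ) + a.val) % q then 1 else 0))
          * (star ((ζ:ℂ) ^ ((γ:ℕ) * b.val)) * (ζ:ℂ) ^ ((δ:ℕ) * b.val)))
        = ((if (α:ℕ) = ((γ:ℕ) + a.val) % q then (1:ℂ) else 0)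
            * (if (β:ℕ) = ((δ:ℕ) + a.val) % q then 1 else 0))
          * (if γ = δ then (q:ℂ) else 0) := by
    intro a
    rw [← Finset.mul_sum, zeta_sum]
  simp_rw [h2]
  by_cases hgd : γ = δ
  · subst hgd
    rw [if_pos rfl, ← Finset.sum_mul, ind_sum]
    by_cases hab : α = β <;> simp [hab] <;> ring
  · simp [hgd]

variable {ι : Type} [Fintype ι] [DecidableEq ι]

/-- support of a label vector -/
def suppP (p : ι → ZMod q × ZMod q) : Finset ι := Finset.univ.filter fun i => p i ≠ 0

lemma sum_prod_eval {κ : Type} [Fintype κ] (h : ι → κ → ℂ) :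
    ∑ a : ι → κ, ∏ i, h i (a i) = ∏ i, ∑ α : κ, h i α := by
  rw [Finset.prod_univ_sum, Fintype.piFinset_univ]

lemma sum_sum_prod_eval {κ : Type} [Fintype κ] (F : ι → κ → κ → ℂ) :
    ∑ a : ι → κ, ∑ b : ι → κ, ∏ i, F i (a i) (b i) = ∏ i, ∑ α : κ, ∑ β : κ, F i α β := by
  have h1 : ∀ a : ι → κ, ∑ b : ι → κ, ∏ i, F i (a i) (b i) = ∏ i, ∑ β : κ, F i (a i) β :=
    fun a => sum_prod_eval (fun i β => F i (a i) β)
  simp_rw [h1]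
  exact sum_prod_eval (fun i α => ∑ β : κ, F i α β)

lemma sum_supp_subset (S : Finset ι) (f : ι → ZMod q × ZMod q → ℂ) :
    ∑ p ∈ Finset.univ.filter (fun p : ι → ZMod q × ZMod q => suppP q p ⊆ S), ∏ i, f i (p i)
      = ∏ i, if i ∈ S then (∑ r : ZMod q × ZMod q, f i r) else f i 0 := by
  rw [Finset.sum_filter]
  have key : ∀ p : ι → ZMod q × ZMod q,
      (if suppP q p ⊆ S then ∏ i, f i (p i) else 0)
        = ∏ i, (if i ∈ S then f i (p i) else if p i = 0 then f i (p i) else 0) := by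
    intro p
    by_cases hp : suppP q p ⊆ S
    · rw [if_pos hp]
      refine Finset.prod_congr rfl fun i _ => ?_
      by_cases hi : i ∈ S
      · rw [if_pos hi]
      · have h0 : p i = 0 := by
          by_contra hne
          exact hi (hp (by simp [suppP, hne]))
        rw [if_neg hi, if_pos h0]
    · rw [if_neg hp]
      obtain ⟨i, hiS, hip⟩ : ∃ i, i ∉ S ∧ p i ≠ 0 := by
        rw [Finset.not_subset] at hp
        obtain ⟨i, hi1, hi2⟩ := hp
        exact ⟨i, hi2, by simpa [suppP] using hi1⟩
      symm
      refine Finset.prod_eq_zero (Finset.mem_univ i) ?_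
      rw [if_neg hiS, if_neg hip]
  simp_rw [key]
  rw [sum_prod_eval (fun i r => if i ∈ S then f i r else if r = 0 then f i r else 0)]
  refine Finset.prod_congr rfl fun i _ => ?_
  by_cases hi : i ∈ S
  · simp [hi]
  · simp [hi, Finset.sum_ite_eq']

/-- one-site kernel -/
def Ksite (S : Finset ι) (i : ι) (x y a b : Fin q) : ℂ :=
  if i ∈ S then (q : ℂ) * ((if x = y then 1 else 0) * (if a = b then 1 else 0))
  else (if x = a then 1 else 0) * (if y = b then 1 else 0)

def PhiP (S : Finset ι) (M : Matrix (ι → Fin q) (ι → Fin q) ℂ) :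
    Matrix (ι → Fin q) (ι → Fin q) ℂ :=
  ∑ p ∈ Finset.univ.filter (fun p : ι → ZMod q × ZMod q => suppP q p ⊆ S),
    (EV q p)ᴴ * M * EV q p

lemma PhiP_apply (S : Finset ι) (M : Matrix (ι → Fin q) (ι → Fin q) ℂ) (v w : ι → Fin q) :
    PhiP q S M v w
      = ∑ x : ι → Fin q, ∑ y : ι → Fin q, M x y * ∏ i, Ksite q S i (x i) (y i) (v i) (w i) := by
  rw [PhiP, Matrix.sum_apply]
  have hterm : ∀ p : ι → ZMod q × ZMod q,
      ((EV q p)ᴴ * M * EV q p) v w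
        = ∑ x : ι → Fin q, ∑ y : ι → Fin q,
            M x y * ∏ i, (star (Epauli q (p i) (x i) (v i)) * Epauli q (p i) (y i) (w i)) := by
    intro p
    rw [Matrix.mul_apply]
    simp_rw [Matrix.mul_apply, Finset.sum_mul]
    rw [Finset.sum_comm]
    refine Finset.sum_congr rfl fun x _ => Finset.sum_congr rfl fun y _ => ?_
    rw [Matrix.conjTranspose_apply]
    simp only [EV]
    rw [star_prod, Finset.prod_mul_distrib]
    ring
  simp_rw [hterm]
  rw [Finset.sum_comm]
  refine Finset.sum_congr rfl fun x _ => ?_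
  rw [Finset.sum_comm]
  refine Finset.sum_congr rfl fun y _ => ?_
  rw [← Finset.mul_sum,
    sum_supp_subset q S (fun i r => star (Epauli q r (x i) (v i)) * Epauli q r (y i) (w i))]
  congr 1
  refine Finset.prod_congr rfl fun i _ => ?_
  by_cases hi : i ∈ S
  · rw [if_pos hi, Ksite, if_pos hi, orth]
  · rw [if_neg hi, Ksite, if_neg hi, Epauli_zero]
    by_cases h1 : x i = v i <;> by_cases h2 : y i = w i <;>
      simp [Matrix.one_apply, h1, h2]

lemma conj_apply (Us : ι → Matrix (Fin q) (Fin q) ℂ) (N : Matrix (ι → Fin q) (ι → Fin q) ℂ)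
    (v w : ι → Fin q) :
    (kron q Us * N * (kron q Us)ᴴ) v w
      = ∑ x : ι → Fin q, ∑ y : ι → Fin q,
          N x y * ∏ i, (Us i (v i) (x i) * star (Us i (w i) (y i))) := by
  rw [Matrix.mul_apply]
  simp_rw [Matrix.mul_apply, Finset.sum_mul]
  rw [Finset.sum_comm]
  refine Finset.sum_congr rfl fun x _ => Finset.sum_congr rfl fun y _ => ?_
  rw [Matrix.conjTranspose_apply]
  simp only [kron]
  rw [star_prod, Finset.prod_mul_distrib]
  ring

lemma site_swap (S : Finset ι) (Us : ι → Matrix (Fin q) (Fin q) ℂ)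
    (hU : ∀ j, Us j ∈ Matrix.unitaryGroup (Fin q) ℂ) (i : ι) (x y v w : Fin q) :
    ∑ α : Fin q, ∑ β : Fin q, Ksite q S i x y α β * (Us i v α * star (Us i w β))
      = ∑ α : Fin q, ∑ β : Fin q, (Us i α x * star (Us i β y)) * Ksite q S i α β v w := by
  have h1 := (hU i).2
  have h2 := (hU i).1
  rw [Matrix.star_eq_conjTranspose] at h1 h2
  have hrow : ∀ a b : Fin q, ∑ α : Fin q, Us i a α * star (Us i b α) = if a = b then 1 else 0 := by
    intro a b
    have h := congrFun (congrFun h1 a) b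
    rw [Matrix.mul_apply] at h
    simp only [Matrix.conjTranspose_apply] at h
    rw [h, Matrix.one_apply]
  have hcol : ∀ a b : Fin q, ∑ α : Fin q, Us i α a * star (Us i α b) = if a = b then 1 else 0 := by
    intro a b
    have h := congrFun (congrFun h2 b) a
    rw [Matrix.mul_apply] at h
    simp only [Matrix.conjTranspose_apply] at h
    have h' : ∑ α : Fin q, Us i α a * star (Us i α b) = (1 : Matrix (Fin q) (Fin q) ℂ) b a := by
      rw [← h]; exact Finset.sum_congr rfl fun α _ => mul_comm _ _
    rw [h', Matrix.one_apply]
    exact if_congr eq_comm rfl rfl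
  by_cases hi : i ∈ S
  · have hL : ∑ α : Fin q, ∑ β : Fin q, Ksite q S i x y α β * (Us i v α * star (Us i w β))
        = (q:ℂ) * (if x = y then 1 else 0) * (if v = w then 1 else 0) := by
      have e1 : ∀ α β : Fin q, Ksite q S i x y α β * (Us i v α * star (Us i w β))
          = if α = β then ((q:ℂ) * (if x = y then 1 else 0)) * (Us i v α * star (Us i w β)) else 0 := by
        intro α β
        simp only [Ksite, if_pos hi]
        by_cases hab : α = β <;> by_cases hxy : x = y <;> simp [hab, hxy]
      simp_rw [e1, Finset.sum_ite_eq, Finset.mem_univ, if_true]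
      rw [← Finset.mul_sum, hrow v w]
    have hR : ∑ α : Fin q, ∑ β : Fin q, (Us i α x * star (Us i β y)) * Ksite q S i α β v w
        = (q:ℂ) * (if x = y then 1 else 0) * (if v = w then 1 else 0) := by
      have e1 : ∀ α β : Fin q, (Us i α x * star (Us i β y)) * Ksite q S i α β v w
          = if α = β then (Us i α x * star (Us i β y)) * ((q:ℂ) * (if v = w then 1 else 0)) else 0 := by
        intro α β
        simp only [Ksite, if_pos hi]
        by_cases hab : α = β <;> by_cases hvw : v = w <;> simp [hab, hvw] <;> ring
      simp_rw [e1, Finset.sum_ite_eq, Finset.mem_univ, if_true]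
      rw [← Finset.sum_mul, hcol x y]
      by_cases hxy : x = y <;> simp [hxy] <;> ring
    rw [hL, hR]
  · have hL : ∑ α : Fin q, ∑ β : Fin q, Ksite q S i x y α β * (Us i v α * star (Us i w β))
        = Us i v x * star (Us i w y) := by
      have e1 : ∀ α β : Fin q, Ksite q S i x y α β * (Us i v α * star (Us i w β))
          = if y = β then (if x = α then Us i v α * star (Us i w β) else 0) else 0 := by
        intro α β
        simp only [Ksite, if_neg hi]
        by_cases h1' : x = α <;> by_cases h2' : y = β <;> simp [h1', h2']
      simp_rw [e1, Finset.sum_ite_eq, Finset.mem_univ, if_true]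
      simp
    have hR : ∑ α : Fin q, ∑ β : Fin q, (Us i α x * star (Us i β y)) * Ksite q S i α β v w
        = Us i v x * star (Us i w y) := by
      have e1 : ∀ α β : Fin q, (Us i α x * star (Us i β y)) * Ksite q S i α β v w
          = if β = w then (if α = v then Us i α x * star (Us i β y) else 0) else 0 := by
        intro α β
        simp only [Ksite, if_neg hi]
        by_cases h1' : α = v <;> by_cases h2' : β = w <;> simp [h1', h2']
      simp_rw [e1, Finset.sum_ite_eq', Finset.mem_univ, if_true]
      simp
    rw [hL, hR]

lemma rearrange (M : Matrix (ι → Fin q) (ι → Fin q) ℂ)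
    (A : ι → Fin q → Fin q → Fin q → Fin q → ℂ) (B : ι → Fin q → Fin q → ℂ) :
    ∑ a : ι → Fin q, ∑ b : ι → Fin q,
        (∑ x : ι → Fin q, ∑ y : ι → Fin q, M x y * ∏ i, A i (x i) (y i) (a i) (b i))
          * ∏ i, B i (a i) (b i)
      = ∑ x : ι → Fin q, ∑ y : ι → Fin q,
          M x y * ∏ i, (∑ α : Fin q, ∑ β : Fin q, A i (x i) (y i) α β * B i α β) := by
  have step1 : ∀ a b : ι → Fin q,
      (∑ x : ι → Fin q, ∑ y : ι → Fin q, M x y * ∏ i, A i (x i) (y i) (a i) (b i))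
          * ∏ i, B i (a i) (b i)
        = ∑ x : ι → Fin q, ∑ y : ι → Fin q,
            M x y * ∏ i, (A i (x i) (y i) (a i) (b i) * B i (a i) (b i)) := by
    intro a b
    rw [Finset.sum_mul]
    refine Finset.sum_congr rfl fun x _ => ?_
    rw [Finset.sum_mul]
    refine Finset.sum_congr rfl fun y _ => ?_
    rw [Finset.prod_mul_distrib, mul_assoc]
  simp_rw [step1]
  have swap4 :
      ∑ a : ι → Fin q, ∑ b : ι → Fin q, ∑ x : ι → Fin q, ∑ y : ι → Fin q,
          M x y * ∏ i, (A i (x i) (y i) (a i) (b i) * B i (a i) (b i))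
        = ∑ x : ι → Fin q, ∑ y : ι → Fin q, ∑ a : ι → Fin q, ∑ b : ι → Fin q,
          M x y * ∏ i, (A i (x i) (y i) (a i) (b i) * B i (a i) (b i)) := by
    rw [show (∑ a : ι → Fin q, ∑ b : ι → Fin q, ∑ x : ι → Fin q, ∑ y : ι → Fin q,
          M x y * ∏ i, (A i (x i) (y i) (a i) (b i) * B i (a i) (b i)))
        = ∑ a : ι → Fin q, ∑ x : ι → Fin q, ∑ b : ι → Fin q, ∑ y : ι → Fin q,
          M x y * ∏ i, (A i (x i) (y i) (a i) (b i) * B i (a i) (b i)) from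
      Finset.sum_congr rfl fun a _ => Finset.sum_comm]
    rw [Finset.sum_comm]
    refine Finset.sum_congr rfl fun x _ => ?_
    rw [show (∑ a : ι → Fin q, ∑ b : ι → Fin q, ∑ y : ι → Fin q,
          M x y * ∏ i, (A i (x i) (y i) (a i) (b i) * B i (a i) (b i)))
        = ∑ a : ι → Fin q, ∑ y : ι → Fin q, ∑ b : ι → Fin q,
          M x y * ∏ i, (A i (x i) (y i) (a i) (b i) * B i (a i) (b i)) from
      Finset.sum_congr rfl fun a _ => Finset.sum_comm]
    rw [Finset.sum_comm]
  rw [swap4]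
  refine Finset.sum_congr rfl fun x _ => Finset.sum_congr rfl fun y _ => ?_
  simp_rw [← Finset.mul_sum]
  congr 1
  exact sum_sum_prod_eval (fun i α β => A i (x i) (y i) α β * B i α β)

lemma PhiP_conj (S : Finset ι) (Us : ι → Matrix (Fin q) (Fin q) ℂ)
    (hU : ∀ j, Us j ∈ Matrix.unitaryGroup (Fin q) ℂ) (M : Matrix (ι → Fin q) (ι → Fin q) ℂ) :
    PhiP q S (kron q Us * M * (kron q Us)ᴴ) = kron q Us * PhiP q S M * (kron q Us)ᴴ := by
  ext v w
  rw [PhiP_apply, conj_apply]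
  simp_rw [conj_apply q Us M, PhiP_apply q S M]
  have l1 := rearrange q M (fun i ξ η α β => Us i α ξ * star (Us i β η))
    (fun i α β => Ksite q S i α β (v i) (w i))
  have l2 := rearrange q M (fun i ξ η α β => Ksite q S i ξ η α β)
    (fun i α β => Us i (v i) α * star (Us i (w i) β))
  rw [l1, l2]
  refine Finset.sum_congr rfl fun x _ => Finset.sum_congr rfl fun y _ => ?_
  congr 1
  refine Finset.prod_congr rfl fun i _ => ?_
  exact (site_swap q S Us hU i (x i) (y i) (v i) (w i)).symm

-- kron algebra
lemma kron_mul (Us Vs : ι → Matrix (Fin q) (Fin q) ℂ) :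
    kron q Us * kron q Vs = kron q (fun i => Us i * Vs i) := by
  ext v w
  rw [Matrix.mul_apply]
  simp only [kron, ← Finset.prod_mul_distrib]
  rw [sum_prod_eval (fun i α => Us i (v i) α * Vs i α (w i))]
  exact Finset.prod_congr rfl fun i _ => (Matrix.mul_apply).symm

lemma kron_conjTranspose (Us : ι → Matrix (Fin q) (Fin q) ℂ) :
    (kron q Us)ᴴ = kron q (fun i => (Us i)ᴴ) := by
  ext v w
  simp only [Matrix.conjTranspose_apply, kron, star_prod]

lemma kron_one : kron q (fun _ : ι => (1 : Matrix (Fin q) (Fin q) ℂ)) = 1 := by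
  ext v w
  by_cases h : v = w
  · subst h; simp [kron, Matrix.one_apply]
  · obtain ⟨i, hi⟩ : ∃ i, v i ≠ w i := by
      by_contra hc; push_neg at hc; exact h (funext hc)
    have hz : (fun i => (1 : Matrix (Fin q) (Fin q) ℂ) (v i) (w i)) i = 0 :=
      Matrix.one_apply_ne hi
    show (∏ i, (1 : Matrix (Fin q) (Fin q) ℂ) (v i) (w i)) = (1 : Matrix (ι → Fin q) (ι → Fin q) ℂ) v w
    rw [Matrix.one_apply_ne h]
    exact Finset.prod_eq_zero (Finset.mem_univ i) hz

lemma kron_unitary (Us : ι → Matrix (Fin q) (Fin q) ℂ)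
    (hU : ∀ j, Us j ∈ Matrix.unitaryGroup (Fin q) ℂ) :
    (kron q Us)ᴴ * kron q Us = 1 := by
  rw [kron_conjTranspose, kron_mul]
  rw [show (fun i => (Us i)ᴴ * Us i) = fun _ : ι => (1 : Matrix (Fin q) (Fin q) ℂ) from
    funext fun i => (hU i).1]
  exact kron_one q

-- trace formulation
def trB (M₁ M₂ : Matrix (ι → Fin q) (ι → Fin q) ℂ) (p : ι → ZMod q × ZMod q) : ℂ :=
  Matrix.trace ((EV q p)ᴴ * M₁ * EV q p * M₂)

def Fsum (S : Finset ι) (M₁ M₂ : Matrix (ι → Fin q) (ι → Fin q) ℂ) : ℂ :=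
  ∑ p ∈ Finset.univ.filter (fun p : ι → ZMod q × ZMod q => suppP q p ⊆ S), trB q M₁ M₂ p

def Gsum (S : Finset ι) (M₁ M₂ : Matrix (ι → Fin q) (ι → Fin q) ℂ) : ℂ :=
  ∑ p ∈ Finset.univ.filter (fun p : ι → ZMod q × ZMod q => suppP q p = S), trB q M₁ M₂ p

lemma Fsum_eq_trace (S : Finset ι) (M₁ M₂ : Matrix (ι → Fin q) (ι → Fin q) ℂ) :
    Fsum q S M₁ M₂ = Matrix.trace (PhiP q S M₁ * M₂) := by
  rw [PhiP, Finset.sum_mul, Matrix.trace_sum]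
  exact Finset.sum_congr rfl fun p _ => rfl

lemma Fsum_invariant (S : Finset ι) (Us : ι → Matrix (Fin q) (Fin q) ℂ)
    (hU : ∀ j, Us j ∈ Matrix.unitaryGroup (Fin q) ℂ)
    (M₁ M₂ : Matrix (ι → Fin q) (ι → Fin q) ℂ) :
    Fsum q S (kron q Us * M₁ * (kron q Us)ᴴ) (kron q Us * M₂ * (kron q Us)ᴴ)
      = Fsum q S M₁ M₂ := by
  rw [Fsum_eq_trace, Fsum_eq_trace, PhiP_conj q S Us hU]
  have h1 := kron_unitary q Us hU
  calc Matrix.trace (kron q Us * PhiP q S M₁ * (kron q Us)ᴴ * (kron q Us * M₂ * (kron q Us)ᴴ))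
      = Matrix.trace (kron q Us * (PhiP q S M₁ * M₂) * (kron q Us)ᴴ) := by
        rw [show kron q Us * PhiP q S M₁ * (kron q Us)ᴴ * (kron q Us * M₂ * (kron q Us)ᴴ)
            = kron q Us * PhiP q S M₁ * ((kron q Us)ᴴ * kron q Us) * M₂ * (kron q Us)ᴴ by
          noncomm_ring]
        rw [h1, Matrix.mul_one, Matrix.mul_assoc (kron q Us) (PhiP q S M₁) M₂]
    _ = Matrix.trace ((kron q Us)ᴴ * (kron q Us) * (PhiP q S M₁ * M₂)) := by
        rw [Matrix.trace_mul_cycle]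
    _ = Matrix.trace (PhiP q S M₁ * M₂) := by rw [h1, Matrix.one_mul]

-- Möbius
lemma neg_one_pow_sum (s : Finset ι) :
    ∑ t ∈ s.powerset, (-1 : ℂ) ^ t.card = if s = ∅ then 1 else 0 := by
  have h := Finset.prod_add (fun _ : ι => (-1:ℂ)) (fun _ => 1) s
  simp only [neg_add_cancel, Finset.prod_const, Finset.prod_const_one, mul_one, one_pow] at h
  rw [← h]
  rcases eq_or_ne s ∅ with rfl | hs
  · simp
  · rw [if_neg hs, zero_pow]
    simpa [Finset.card_eq_zero] using hs

lemma mobius_core (R S : Finset ι) :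
    (∑ T ∈ S.powerset, if R ⊆ T then (-1 : ℂ) ^ ((S \ T).card) else 0)
      = if R = S then 1 else 0 := by
  rw [← Finset.sum_filter]
  by_cases hRS : R ⊆ S
  · have key : ∑ T ∈ S.powerset.filter (fun T => R ⊆ T), (-1:ℂ) ^ ((S \ T).card)
        = ∑ T' ∈ (S \ R).powerset, (-1:ℂ) ^ T'.card := by
      refine Finset.sum_nbij' (fun T => S \ T) (fun T' => S \ T') ?_ ?_ ?_ ?_ ?_
      · intro T hT
        simp only [Finset.mem_filter, Finset.mem_powerset] at hT ⊢
        exact Finset.sdiff_subset_sdiff (le_refl S) hT.2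
      · intro T' hT'
        simp only [Finset.mem_powerset] at hT'
        simp only [Finset.mem_filter, Finset.mem_powerset]
        refine ⟨Finset.sdiff_subset, fun x hx => ?_⟩
        rw [Finset.mem_sdiff]
        refine ⟨hRS hx, fun hxT' => ?_⟩
        have := hT' hxT'
        rw [Finset.mem_sdiff] at this
        exact this.2 hx
      · intro T hT
        simp only [Finset.mem_filter, Finset.mem_powerset] at hT
        exact Finset.sdiff_sdiff_eq_self hT.1
      · intro T' hT'
        simp only [Finset.mem_powerset] at hT'
        exact Finset.sdiff_sdiff_eq_self (hT'.trans Finset.sdiff_subset)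
      · intro T _; rfl
    rw [key, neg_one_pow_sum]
    by_cases h : R = S
    · subst h; simp
    · rw [if_neg h, if_neg]
      intro hc
      exact h (Finset.Subset.antisymm hRS (Finset.sdiff_eq_empty_iff_subset.mp hc))
  · rw [Finset.filter_false_of_mem, Finset.sum_empty, if_neg]
    · exact fun h => hRS (h ▸ Finset.Subset.refl R)
    · intro T hT hR
      exact hRS (hR.trans (Finset.mem_powerset.mp hT))

lemma Gsum_eq (S : Finset ι) (M₁ M₂ : Matrix (ι → Fin q) (ι → Fin q) ℂ) :
    Gsum q S M₁ M₂ = ∑ T ∈ S.powerset, (-1 : ℂ) ^ ((S \ T).card) * Fsum q T M₁ M₂ := by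
  simp only [Fsum, Finset.sum_filter, Finset.mul_sum]
  rw [Finset.sum_comm, Gsum, Finset.sum_filter]
  refine Finset.sum_congr rfl fun p _ => ?_
  have h : ∀ T, ((-1:ℂ) ^ ((S \ T).card) * if suppP q p ⊆ T then trB q M₁ M₂ p else 0)
      = (if suppP q p ⊆ T then (-1:ℂ) ^ ((S \ T).card) else 0) * trB q M₁ M₂ p := by
    intro T; by_cases hc : suppP q p ⊆ T <;> simp [hc]
  rw [Finset.sum_congr rfl fun T _ => h T, ← Finset.sum_mul, mobius_core]
  by_cases hc : suppP q p = S <;> simp [hc]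

lemma enumB_eq (M₁ M₂ : Matrix (ι → Fin q) (ι → Fin q) ℂ) :
    enumB q M₁ M₂ = ∑ S : Finset ι, Polynomial.C (Gsum q S M₁ M₂) * Polynomial.X ^ S.card := by
  rw [enumB,
    ← Finset.sum_fiberwise Finset.univ (fun p => suppP q p)
      (fun p : ι → ZMod q × ZMod q =>
        Polynomial.C (Matrix.trace ((EV q p)ᴴ * M₁ * EV q p * M₂)) * Polynomial.X ^ wtL q p)]
  refine Finset.sum_congr rfl fun S _ => ?_
  rw [Gsum, map_sum, Finset.sum_mul]
  refine Finset.sum_congr rfl fun p hp => ?_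
  have hs : suppP q p = S := (Finset.mem_filter.mp hp).2
  have hw : wtL q p = S.card := by rw [← hs]; rfl
  rw [hw]; rfl

end SLAux

/-- Local unitary invariance of the Shor–Laflamme `B`-enumerator. -/
theorem stmt2 (q n : ℕ) [NeZero q] (hq : 2 ≤ q) (hn : 1 ≤ n)
    (M₁ M₂ : Matrix ((Fin n) → Fin q) ((Fin n) → Fin q) ℂ)
    (hM₁ : M₁.IsHermitian) (hM₂ : M₂.IsHermitian)
    (Us : Fin n → Matrix (Fin q) (Fin q) ℂ)
    (hU : ∀ j, Us j ∈ Matrix.unitaryGroup (Fin q) ℂ) :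
    enumB q (kron q Us * M₁ * (kron q Us)ᴴ) (kron q Us * M₂ * (kron q Us)ᴴ) =
      enumB q M₁ M₂ := by
  rw [SLAux.enumB_eq, SLAux.enumB_eq]
  refine Finset.sum_congr rfl fun S _ => ?_
  rw [SLAux.Gsum_eq, SLAux.Gsum_eq]
  have : ∀ T ∈ S.powerset, (-1 : ℂ) ^ ((S \ T).card) *
      SLAux.Fsum q T (kron q Us * M₁ * (kron q Us)ᴴ) (kron q Us * M₂ * (kron q Us)ᴴ)
      = (-1 : ℂ) ^ ((S \ T).card) * SLAux.Fsum q T M₁ M₂ := fun T _ => by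
    rw [SLAux.Fsum_invariant q T Us hU]
  rw [Finset.sum_congr rfl this]
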